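/- For every even integer d ≥ 2, the following binomial-coefficient inequality holds: C(d, d/2) ≥ 2^{d/16} · Σ_{i=0}^{⌊d/32⌋} C(d/2, i)², where C(n,k) denotes the binomial coefficient. -/

import Mathlib

open Finset

lemma choose_mono_left {n i m : ℕ} (hm : m ≤ n / 2) (him : i ≤ m) :
    n.choose i ≤ n.choose m := by
  induction m with
  | zero => simp [Nat.le_zero.mp him]
  | succ k ih =>
    rcases Nat.lt_or_ge i (k + 1) with h | h
    · exact (ih (by omega) (by omega)).trans
        (Nat.choose_le_succ_of_lt_half_left (by omega))
    · have : i = k + 1 := by omega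
      simp [this]

lemma choose_doubling (n m : ℕ) : ∀ t, m + t ≤ n / 3 →
    n.choose m * 2 ^ t ≤ n.choose (m + t) := by
  intro t
  induction t with
  | zero => simp
  | succ s ih =>
    intro h
    have hs : m + s ≤ n / 3 := by omega
    set j := m + s with hj
    have key : 2 * n.choose j * (j + 1) ≤ n.choose (j + 1) * (j + 1) := by
      rw [Nat.choose_succ_right_eq]
      have h1 : 2 * (j + 1) ≤ n - j := by omega
      calc 2 * n.choose j * (j + 1) = n.choose j * (2 * (j + 1)) := by ring
        _ ≤ n.choose j * (n - j) := Nat.mul_le_mul_left _ h1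
    have h2 : 2 * n.choose j ≤ n.choose (j + 1) :=
      Nat.le_of_mul_le_mul_right key (by omega)
    calc n.choose m * 2 ^ (s + 1) = 2 * (n.choose m * 2 ^ s) := by ring
      _ ≤ 2 * n.choose j := by
          exact Nat.mul_le_mul_left 2 (ih hs)
      _ ≤ n.choose (j + 1) := h2
      _ = n.choose (m + (s + 1)) := rfl

lemma choose_sq_le_central (n J : ℕ) (hJ : J ≤ n) :
    n.choose J ^ 2 ≤ (n + n).choose n := by
  rw [Nat.add_choose_eq]
  have hmem : (J, n - J) ∈ Finset.HasAntidiagonal.antidiagonal n := by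
    rw [Finset.HasAntidiagonal.mem_antidiagonal]; omega
  have hterm : n.choose J ^ 2 = n.choose J * n.choose (n - J) := by
    rw [Nat.choose_symm hJ, sq]
  rw [hterm]
  exact Finset.single_le_sum (f := fun (ij : ℕ × ℕ) => n.choose ij.1 * n.choose ij.2) (fun i _ => Nat.zero_le _) hmem

lemma key_nat (n : ℕ) (hn : 16 ≤ n) :
    2 ^ (n / 8 + 1) * ∑ i ∈ Finset.range (n / 16 + 1), (n.choose i) ^ 2
      ≤ (n + n).choose n := by
  set m := n / 16 with hm
  set J := n / 3 with hJ
  have hmJ : m ≤ J := by omega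
  have hsum : ∑ i ∈ Finset.range (m + 1), (n.choose i) ^ 2
      ≤ (m + 1) * (n.choose m) ^ 2 := by
    calc ∑ i ∈ Finset.range (m + 1), (n.choose i) ^ 2
        ≤ ∑ _i ∈ Finset.range (m + 1), (n.choose m) ^ 2 := by
          apply Finset.sum_le_sum
          intro i hi
          have : n.choose i ≤ n.choose m :=
            choose_mono_left (by omega) (by simp at hi; omega)
          exact Nat.pow_le_pow_left this 2
      _ = (m + 1) * (n.choose m) ^ 2 := by
          rw [Finset.sum_const, Finset.card_range, smul_eq_mul]
  have hdbl : n.choose m * 2 ^ (J - m) ≤ n.choose J := by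
    have := choose_doubling n m (J - m) (by omega)
    rwa [Nat.add_sub_cancel' hmJ] at this
  have hexp : n / 8 + 1 + m ≤ 2 * (J - m) := by omega
  have hm2 : m + 1 ≤ 2 ^ m := m.lt_two_pow_self
  calc 2 ^ (n / 8 + 1) * ∑ i ∈ Finset.range (m + 1), (n.choose i) ^ 2
      ≤ 2 ^ (n / 8 + 1) * ((m + 1) * (n.choose m) ^ 2) :=
        Nat.mul_le_mul_left _ hsum
    _ ≤ 2 ^ (n / 8 + 1) * (2 ^ m * (n.choose m) ^ 2) :=
        Nat.mul_le_mul_left _ (Nat.mul_le_mul_right _ hm2)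
    _ = 2 ^ (n / 8 + 1 + m) * (n.choose m) ^ 2 := by rw [pow_add]; ring
    _ ≤ 2 ^ (2 * (J - m)) * (n.choose m) ^ 2 :=
        Nat.mul_le_mul_right _ (Nat.pow_le_pow_right (by norm_num) hexp)
    _ = (n.choose m * 2 ^ (J - m)) ^ 2 := by rw [two_mul, pow_add]; ring
    _ ≤ (n.choose J) ^ 2 := Nat.pow_le_pow_left hdbl 2
    _ ≤ (n + n).choose n := choose_sq_le_central n J (by omega)

/-- For every even `d ≥ 2`,
`C(d, d/2) ≥ 2^{d/16} · ∑_{i=0}^{⌊d/32⌋} C(d/2, i)²`. -/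
theorem stmt_2 (d : ℕ) (hd : 2 ≤ d) (hde : Even d) :
    (2 : ℝ) ^ ((d : ℝ) / 16) *
        (∑ i ∈ Finset.range (d / 32 + 1), ((d / 2).choose i : ℝ) ^ 2)
      ≤ (d.choose (d / 2) : ℝ) := by
  obtain ⟨n, hn⟩ := hde
  have hd2 : d / 2 = n := by omega
  rcases lt_or_ge d 32 with hsmall | hbig
  · -- small case: d/32 = 0, sum = 1
    have h32 : d / 32 = 0 := by omega
    rw [h32]
    rw [Finset.sum_range_one]
    norm_num
    have hexp : (d : ℝ) / 16 ≤ ((d / 16 + 1 : ℕ) : ℝ) := by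
      have : (d : ℝ) ≤ 16 * ((d / 16 : ℕ) : ℝ) + 16 := by
        exact_mod_cast Nat.le_of_lt (by omega : d < 16 * (d / 16) + 16)
      push_cast
      linarith
    have h1 : (2 : ℝ) ^ ((d : ℝ) / 16) ≤ (2 : ℝ) ^ ((d / 16 + 1 : ℕ) : ℝ) :=
      Real.rpow_le_rpow_of_exponent_le one_le_two hexp
    rw [Real.rpow_natCast] at h1
    refine h1.trans ?_
    have hnat : 2 ^ (d / 16 + 1) ≤ d.choose (d / 2) := by
      have hn1 : 1 ≤ n := by omega
      have hn15 : n ≤ 15 := by omega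
      subst hn
      interval_cases n <;> decide
    exact_mod_cast hnat
  · -- large case
    have hn16 : 16 ≤ n := by omega
    have h32 : d / 32 = n / 16 := by omega
    have hexp : (d : ℝ) / 16 ≤ ((n / 8 + 1 : ℕ) : ℝ) := by
      have : (n : ℝ) ≤ 8 * ((n / 8 : ℕ) : ℝ) + 8 := by
        exact_mod_cast Nat.le_of_lt (by omega : n < 8 * (n / 8) + 8)
      have hdn : (d : ℝ) = (n : ℝ) + (n : ℝ) := by exact_mod_cast hn
      push_cast
      rw [hdn]
      linarith
    have h1 : (2 : ℝ) ^ ((d : ℝ) / 16) ≤ (2 : ℝ) ^ ((n / 8 + 1 : ℕ) : ℝ) :=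
      Real.rpow_le_rpow_of_exponent_le one_le_two hexp
    rw [Real.rpow_natCast] at h1
    have hS : (0 : ℝ) ≤ ∑ i ∈ Finset.range (d / 32 + 1), ((d / 2).choose i : ℝ) ^ 2 :=
      Finset.sum_nonneg fun i _ => sq_nonneg _
    have hkey := key_nat n hn16
    have hcast : ((2 ^ (n / 8 + 1) * ∑ i ∈ Finset.range (n / 16 + 1),
        (n.choose i) ^ 2 : ℕ) : ℝ) ≤ (((n + n).choose n : ℕ) : ℝ) := by
      exact_mod_cast hkey
    calc (2 : ℝ) ^ ((d : ℝ) / 16) *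
          (∑ i ∈ Finset.range (d / 32 + 1), ((d / 2).choose i : ℝ) ^ 2)
        ≤ ((2 : ℝ) ^ (n / 8 + 1)) *
          (∑ i ∈ Finset.range (d / 32 + 1), ((d / 2).choose i : ℝ) ^ 2) :=
          mul_le_mul_of_nonneg_right h1 hS
      _ = ((2 ^ (n / 8 + 1) * ∑ i ∈ Finset.range (n / 16 + 1),
          (n.choose i) ^ 2 : ℕ) : ℝ) := by
          rw [h32, hd2]
          push_cast
          ring
      _ ≤ (((n + n).choose n : ℕ) : ℝ) := hcast
      _ = (d.choose (d / 2) : ℝ) := by rw [hd2, ← hn]
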